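/- For every k ≥ 1, the subgroup of the genus-k surface group G_k generated by a_1,…,a_k is free on these generators: the group homomorphism from the free group FreeGroup (Fin k) to G_k sending the i-th free generator to a_i is injective. Consequently, every element of the subgroup generated by a_1,…,a_k has a unique reduced expression x_1^{λ_1} x_2^{λ_2} ⋯ x_m^{λ_m} with each x_t ∈ {a_1,…,a_k}, consecutive x_t distinct, and each λ_t a nonzero integer. -/

import Mathlib

/-- The single relator `∏ i, aᵢ bᵢ aᵢ⁻¹ bᵢ⁻¹` of the genus-`k` surface group. -/
def surfaceRelator (k : ℕ) : FreeGroup (Fin k ⊕ Fin k) :=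
  (List.ofFn fun i : Fin k =>
    FreeGroup.of (Sum.inl i) * FreeGroup.of (Sum.inr i) *
      (FreeGroup.of (Sum.inl i))⁻¹ * (FreeGroup.of (Sum.inr i))⁻¹).prod

/-- The genus-`k` surface group `G_k = π₁(T(k))`. -/
def SurfaceGroup (k : ℕ) : Type :=
  PresentedGroup ({surfaceRelator k} : Set (FreeGroup (Fin k ⊕ Fin k)))

instance (k : ℕ) : Group (SurfaceGroup k) := by
  unfold SurfaceGroup; infer_instance

/-- The generator `aᵢ` of the surface group. -/
def surfaceA {k : ℕ} (i : Fin k) : SurfaceGroup k :=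
  PresentedGroup.of (Sum.inl i)

/-- The retraction data: send `aᵢ ↦ xᵢ`, `bᵢ ↦ 1`. -/
def surfaceRetractFun (k : ℕ) : Fin k ⊕ Fin k → FreeGroup (Fin k) :=
  Sum.elim FreeGroup.of (fun _ => 1)

lemma surfaceRetract_relator (k : ℕ) :
    FreeGroup.lift (surfaceRetractFun k) (surfaceRelator k) = 1 := by
  unfold surfaceRelator
  rw [map_list_prod]
  apply List.prod_eq_one
  intro x hx
  simp only [List.map_ofFn] at hx
  obtain ⟨i, rfl⟩ := List.mem_ofFn.mp hx
  simp [surfaceRetractFun]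

/-- The retraction homomorphism `G_k →* FreeGroup (Fin k)`. -/
def surfaceRetract (k : ℕ) : SurfaceGroup k →* FreeGroup (Fin k) :=
  PresentedGroup.toGroup (f := surfaceRetractFun k)
    (by intro r hr; rw [Set.mem_singleton_iff] at hr; subst hr
        exact surfaceRetract_relator k)

theorem surfaceGroup_a_subgroup_free (k : ℕ) (hk : 1 ≤ k) :
    Function.Injective
      (FreeGroup.lift (fun i : Fin k => surfaceA i) :
        FreeGroup (Fin k) →* SurfaceGroup k) := by
  have h : ∀ x, surfaceRetract k
      ((FreeGroup.lift (fun i : Fin k => surfaceA i)) x) = x := by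
    intro x
    induction x using FreeGroup.induction_on with
    | C1 => rw [map_one, map_one]
    | of i =>
        show surfaceRetract k
          ((FreeGroup.lift (fun i : Fin k => surfaceA i)) (FreeGroup.of i)) = FreeGroup.of i
        rw [FreeGroup.lift_apply_of]
        show surfaceRetract k (PresentedGroup.of (Sum.inl i)) = FreeGroup.of i
        exact PresentedGroup.toGroup.of (f := surfaceRetractFun k)
          (fun r hr => by rw [Set.mem_singleton_iff] at hr; subst hr
                          exact surfaceRetract_relator k)
    | inv_of i hi => simp only [map_inv, hi]
    | mul x y hx hy => simp only [map_mul, hx, hy]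
  intro a b hab
  have := congrArg (surfaceRetract k) hab
  rwa [h, h] at this
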